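/- Let S be a closed connected LNE subset of the unit sphere S^{n-1} in R^n and Ŝ⁺ the non-negative cone over S with vertex 0. Then for any R > 0, the set Ŝ⁺ \ {x : |x| < R} (the cone truncated below radius R) is Lipschitz normally embedded. -/

import Mathlib

open scoped ENNReal

noncomputable def pathLength {E : Type*} [PseudoEMetricSpace E] (γ : ℝ → E) : ℝ≥0∞ :=
  eVariationOn γ (Set.Icc 0 1)

noncomputable def innerDist {E : Type*} [PseudoEMetricSpace E] (S : Set E) (x y : E) : ℝ≥0∞ :=
  ⨅ (γ : ℝ → E) (_ : ContinuousOn γ (Set.Icc 0 1)) (_ : γ 0 = x) (_ : γ 1 = y)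
    (_ : γ '' Set.Icc 0 1 ⊆ S), pathLength γ

def IsLNEWith {E : Type*} [NormedAddCommGroup E] (L : ℝ) (S : Set E) : Prop :=
  ∀ x ∈ S, ∀ y ∈ S, innerDist S x y ≤ ENNReal.ofReal (L * dist x y)

def IsLNE {E : Type*} [NormedAddCommGroup E] (S : Set E) : Prop :=
  ∃ L > 0, IsLNEWith L S

def nonnegCone {n : ℕ} (S : Set (EuclideanSpace ℝ (Fin n))) : Set (EuclideanSpace ℝ (Fin n)) :=
  {x | ∃ t : ℝ, 0 ≤ t ∧ ∃ u ∈ S, x = t • u}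

lemma innerDist_le' {E : Type*} [PseudoEMetricSpace E] {S : Set E} {x y : E} {γ : ℝ → E}
    (h1 : ContinuousOn γ (Set.Icc 0 1)) (h2 : γ 0 = x) (h3 : γ 1 = y)
    (h4 : γ '' Set.Icc 0 1 ⊆ S) : innerDist S x y ≤ pathLength γ :=
  iInf_le_of_le γ (iInf_le_of_le h1 (iInf_le_of_le h2 (iInf_le_of_le h3 (iInf_le _ h4))))

lemma innerDist_symm_le {E : Type*} [PseudoEMetricSpace E] (S : Set E) (x y : E) :
    innerDist S y x ≤ innerDist S x y := by
  refine le_iInf fun γ => le_iInf fun h1 => le_iInf fun h2 => le_iInf fun h3 =>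
    le_iInf fun h4 => ?_
  have himg : (fun θ : ℝ => 1 - θ) '' Set.Icc 0 1 = Set.Icc (0:ℝ) 1 := by
    rw [show (fun θ : ℝ => 1 - θ) = (fun θ : ℝ => 1 - θ) from rfl, Set.image_const_sub_Icc]
    norm_num
  have hanti : AntitoneOn (fun θ : ℝ => 1 - θ) (Set.Icc 0 1) := by
    intro a _ b _ hab; dsimp; linarith
  have key : pathLength (γ ∘ (fun θ : ℝ => 1 - θ)) = pathLength γ := by
    unfold pathLength
    rw [eVariationOn.comp_eq_of_antitoneOn γ (fun θ : ℝ => 1 - θ) hanti, himg]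
  refine le_trans (innerDist_le' ?_ ?_ ?_ ?_) key.le
  · refine h1.comp ((continuous_const.sub continuous_id).continuousOn) ?_
    intro θ hθ
    exact himg ▸ Set.mem_image_of_mem _ hθ
  · simp [h3]
  · simp [h2]
  · rw [Set.image_comp, himg]; exact h4

set_option maxHeartbeats 1000000 in
lemma key_half {n : ℕ} {S : Set (EuclideanSpace ℝ (Fin n))}
    (hS : S ⊆ Metric.sphere (0 : EuclideanSpace ℝ (Fin n)) 1)
    {L : ℝ} (hL : 0 < L) (hLNE : IsLNEWith L S)
    {R : ℝ} (hR : 0 < R) {x y : EuclideanSpace ℝ (Fin n)}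
    (hx : x ∈ nonnegCone S \ {z | ‖z‖ < R}) (hy : y ∈ nonnegCone S \ {z | ‖z‖ < R})
    (hxy : ‖x‖ ≤ ‖y‖) :
    innerDist (nonnegCone S \ {z | ‖z‖ < R}) x y
      ≤ ENNReal.ofReal ((L + 1) * dist x y) := by
  classical
  set T := nonnegCone S \ {z | ‖z‖ < R} with hT
  obtain ⟨t', ht'0, u, hu, hxu⟩ := hx.1
  obtain ⟨s', hs'0, v, hv, hyv⟩ := hy.1
  have hu1 : ‖u‖ = 1 := by simpa using mem_sphere_zero_iff_norm.mp (hS hu)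
  have hv1 : ‖v‖ = 1 := by simpa using mem_sphere_zero_iff_norm.mp (hS hv)
  have hxt : ‖x‖ = t' := by rw [hxu, norm_smul, hu1, Real.norm_eq_abs, abs_of_nonneg ht'0, mul_one]
  have hys : ‖y‖ = s' := by rw [hyv, norm_smul, hv1, Real.norm_eq_abs, abs_of_nonneg hs'0, mul_one]
  set t := ‖x‖ with htdef
  set s := ‖y‖ with hsdef
  have hxu' : x = t • u := by rw [hxt]; exact hxu
  have hyv' : y = s • v := by rw [hys]; exact hyv
  have hRt : R ≤ t := not_lt.mp hx.2
  have hRs : R ≤ s := not_lt.mp hy.2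
  have ht0 : 0 < t := lt_of_lt_of_le hR hRt
  set d := dist u v with hd
  have hd0 : 0 ≤ d := dist_nonneg
  -- key geometric identity
  have hid : dist x y ^ 2 = (s - t) ^ 2 + t * s * d ^ 2 := by
    have h1 : dist x y ^ 2 = t ^ 2 - 2 * (t * s * inner ℝ u v) + s ^ 2 := by
      rw [dist_eq_norm, hxu', hyv', norm_sub_sq_real]
      rw [real_inner_smul_left, real_inner_smul_right, norm_smul, norm_smul, hu1, hv1]
      rw [Real.norm_eq_abs, Real.norm_eq_abs, abs_of_nonneg ht0.le,
        abs_of_nonneg (le_trans hR.le hRs)]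
      ring
    have h2 : d ^ 2 = 2 - 2 * inner ℝ u v := by
      rw [hd, dist_eq_norm, norm_sub_sq_real, hu1, hv1]
      ring
    rw [h1, h2]; ring
  have hst : s - t ≤ dist x y := by
    have := abs_norm_sub_norm_le y x
    rw [← dist_eq_norm] at this
    calc s - t ≤ |‖y‖ - ‖x‖| := le_abs_self _
    _ ≤ dist y x := this
    _ = dist x y := dist_comm y x
  have harc : t * d ≤ dist x y := by
    nlinarith [dist_nonneg (x := x) (y := y), sq_nonneg (t * d - dist x y),
      mul_nonneg (mul_nonneg ht0.le (sub_nonneg.mpr hxy)) (sq_nonneg d)]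
  -- the LNE bound on S
  have hbound := hLNE u hu v hv
  -- main estimate via epsilon of room
  apply ENNReal.le_of_forall_pos_le_add
  intro ε hε _
  set δ : ℝ≥0∞ := (ε : ℝ≥0∞) / ENNReal.ofReal t with hδ
  have hδ0 : δ ≠ 0 := (ENNReal.div_pos (by exact_mod_cast hε.ne') ENNReal.ofReal_ne_top).ne'
  have hlt : innerDist S u v < ENNReal.ofReal (L * d) + δ :=
    lt_of_le_of_lt hbound (ENNReal.lt_add_right ENNReal.ofReal_ne_top hδ0)
  rw [innerDist] at hlt
  simp only [iInf_lt_iff] at hlt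
  obtain ⟨γ, hγc, hγ0, hγ1, hγS, hγlen⟩ := hlt
  -- build the path
  set ψ : ℝ → ℝ := fun θ => min (2 * θ) 1 with hψ
  set φ : ℝ → ℝ := fun θ => t + max (2 * θ - 1) 0 * (s - t) with hφ
  set Γ : ℝ → EuclideanSpace ℝ (Fin n) := fun θ => φ θ • γ (ψ θ) with hΓ
  have hψmaps : Set.MapsTo ψ (Set.Icc 0 1) (Set.Icc 0 1) := by
    intro θ hθ
    simp only [Set.mem_Icc] at hθ ⊢
    constructor
    · exact le_min (by linarith [hθ.1]) one_pos.le
    · exact min_le_right _ _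
  have hΓc : ContinuousOn Γ (Set.Icc 0 1) := by
    apply ContinuousOn.fun_smul
    · fun_prop
    · exact hγc.comp (by fun_prop) hψmaps
  have hΓ0 : Γ 0 = x := by
    have : φ 0 = t := by simp [hφ]
    have h2 : ψ 0 = 0 := by simp [hψ]
    rw [hΓ]; dsimp only; rw [this, h2, hγ0, ← hxu']
  have hΓ1 : Γ 1 = y := by
    have : φ 1 = s := by simp only [hφ]; norm_num
    have h2 : ψ 1 = 1 := by simp [hψ]
    rw [hΓ]; dsimp only; rw [this, h2, hγ1, ← hyv']
  have hφrange : ∀ θ ∈ Set.Icc (0:ℝ) 1, R ≤ φ θ ∧ φ θ ≤ s := by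
    intro θ hθ
    simp only [Set.mem_Icc] at hθ
    have hmax0 : 0 ≤ max (2 * θ - 1) 0 := le_max_right _ _
    have hmax1 : max (2 * θ - 1) 0 ≤ 1 := max_le (by linarith [hθ.2]) one_pos.le
    constructor
    · have : 0 ≤ max (2 * θ - 1) 0 * (s - t) :=
        mul_nonneg hmax0 (sub_nonneg.mpr hxy)
      simp only [hφ]; linarith
    · have : max (2 * θ - 1) 0 * (s - t) ≤ 1 * (s - t) :=
        mul_le_mul_of_nonneg_right hmax1 (sub_nonneg.mpr hxy)
      simp only [hφ]; linarith
  have hΓS : Γ '' Set.Icc 0 1 ⊆ T := by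
    rintro _ ⟨θ, hθ, rfl⟩
    have hγθ : γ (ψ θ) ∈ S := hγS (Set.mem_image_of_mem γ (hψmaps hθ))
    have hγθ1 : ‖γ (ψ θ)‖ = 1 := by simpa using mem_sphere_zero_iff_norm.mp (hS hγθ)
    obtain ⟨hφR, _⟩ := hφrange θ hθ
    constructor
    · exact ⟨φ θ, le_trans hR.le hφR, γ (ψ θ), hγθ, rfl⟩
    · simp only [Set.mem_setOf_eq, not_lt, hΓ]
      rw [norm_smul, hγθ1, Real.norm_eq_abs, abs_of_nonneg (le_trans hR.le hφR), mul_one]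
      exact hφR
  -- length bound
  have hsplit : pathLength Γ = eVariationOn Γ (Set.Icc 0 (1/2)) + eVariationOn Γ (Set.Icc (1/2) 1) := by
    have := eVariationOn.Icc_add_Icc Γ (s := Set.univ) (a := (0:ℝ)) (b := 1/2) (c := 1)
      (by norm_num) (by norm_num) (Set.mem_univ _)
    simp only [Set.univ_inter] at this
    rw [pathLength, ← this]
  -- piece 1
  have hpiece1 : eVariationOn Γ (Set.Icc 0 (1/2)) ≤ ENNReal.ofReal t * pathLength γ := by
    have heq : Set.EqOn Γ ((t • ·) ∘ γ ∘ ψ) (Set.Icc 0 (1/2)) := by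
      intro θ hθ
      simp only [Set.mem_Icc] at hθ
      have : max (2 * θ - 1) 0 = 0 := max_eq_right (by linarith [hθ.2])
      simp only [hΓ, hφ, Function.comp_apply, this, zero_mul, add_zero]
    rw [eVariationOn.eq_of_eqOn heq]
    have hlip : LipschitzWith ‖t‖₊ ((t • ·) : EuclideanSpace ℝ (Fin n) → _) :=
      lipschitzWith_smul t
    have h1 : eVariationOn ((t • ·) ∘ (γ ∘ ψ)) (Set.Icc 0 (1/2))
        ≤ ‖t‖₊ * eVariationOn (γ ∘ ψ) (Set.Icc 0 (1/2)) :=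
      LipschitzOnWith.comp_eVariationOn_le (hlip.lipschitzOnWith (s := Set.univ))
        (Set.mapsTo_univ _ _)
    have h2 : eVariationOn (γ ∘ ψ) (Set.Icc 0 (1/2)) = pathLength γ := by
      have hmono : MonotoneOn ψ (Set.Icc 0 (1/2)) := by
        intro a _ b _ hab
        exact min_le_min (by linarith) le_rfl
      rw [eVariationOn.comp_eq_of_monotoneOn γ ψ hmono, pathLength]
      congr 1
      apply subset_antisymm
      · rintro _ ⟨θ, hθ, rfl⟩
        exact hψmaps (Set.Icc_subset_Icc le_rfl (by norm_num) hθ)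
      · intro z hz
        simp only [Set.mem_Icc] at hz
        refine ⟨z / 2, ⟨by linarith [hz.1], by linarith [hz.2]⟩, ?_⟩
        simp only [hψ]
        rw [min_eq_left (by linarith [hz.2])]
        ring
    calc eVariationOn ((t • ·) ∘ (γ ∘ ψ)) (Set.Icc 0 (1/2))
        ≤ ‖t‖₊ * eVariationOn (γ ∘ ψ) (Set.Icc 0 (1/2)) := h1
      _ = ENNReal.ofReal t * pathLength γ := by
          rw [h2, ← Real.enorm_eq_ofReal ht0.le]; rfl
  -- piece 2
  have hpiece2 : eVariationOn Γ (Set.Icc (1/2) 1) ≤ ENNReal.ofReal (s - t) := by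
    have heq : Set.EqOn Γ ((· • v) ∘ φ) (Set.Icc (1/2) 1) := by
      intro θ hθ
      simp only [Set.mem_Icc] at hθ
      have : ψ θ = 1 := min_eq_right (by linarith [hθ.1])
      simp only [hΓ, Function.comp_apply, this, hγ1]
    rw [eVariationOn.eq_of_eqOn heq]
    have hlip : LipschitzWith ‖v‖₊ (fun a : ℝ => a • v) := by
      apply LipschitzWith.of_dist_le_mul
      intro a b
      rw [dist_eq_norm, ← sub_smul, norm_smul, Real.norm_eq_abs, Real.dist_eq]
      rw [coe_nnnorm, mul_comm]
    have h1 : eVariationOn ((· • v) ∘ φ) (Set.Icc (1/2) 1)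
        ≤ ‖v‖₊ * eVariationOn φ (Set.Icc (1/2) 1) :=
      LipschitzOnWith.comp_eVariationOn_le (hlip.lipschitzOnWith (s := Set.univ))
        (Set.mapsTo_univ _ _)
    have hmono : MonotoneOn φ (Set.Icc (1/2) 1) := by
      intro a _ b _ hab
      simp only [hφ]
      have : max (2 * a - 1) 0 ≤ max (2 * b - 1) 0 := max_le_max (by linarith) le_rfl
      nlinarith [sub_nonneg.mpr hxy]
    have h2 : eVariationOn φ (Set.Icc (1/2) 1) ≤ ENNReal.ofReal (s - t) := by
      have := hmono.eVariationOn_le (Set.left_mem_Icc.mpr (by norm_num))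
        (Set.right_mem_Icc.mpr (by norm_num))
      rw [Set.inter_self] at this
      refine le_trans this (le_of_eq ?_)
      congr 1
      simp only [hφ]
      norm_num
    calc eVariationOn ((· • v) ∘ φ) (Set.Icc (1/2) 1)
        ≤ ‖v‖₊ * eVariationOn φ (Set.Icc (1/2) 1) := h1
      _ = eVariationOn φ (Set.Icc (1/2) 1) := by
          rw [show ‖v‖₊ = 1 by ext; simp [hv1], ENNReal.coe_one, one_mul]
      _ ≤ ENNReal.ofReal (s - t) := h2
  -- put it together
  have hmain : innerDist T x y
      ≤ ENNReal.ofReal t * pathLength γ + ENNReal.ofReal (s - t) := by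
    refine le_trans (innerDist_le' hΓc hΓ0 hΓ1 hΓS) ?_
    rw [hsplit]
    exact add_le_add hpiece1 hpiece2
  have hγle : pathLength γ ≤ ENNReal.ofReal (L * d) + δ := hγlen.le
  calc innerDist T x y
      ≤ ENNReal.ofReal t * (ENNReal.ofReal (L * d) + δ) + ENNReal.ofReal (s - t) :=
        le_trans hmain (add_le_add_left (mul_le_mul_right hγle _) _)
    _ = ENNReal.ofReal t * ENNReal.ofReal (L * d) + ENNReal.ofReal t * δ
          + ENNReal.ofReal (s - t) := by rw [mul_add]
    _ ≤ ENNReal.ofReal (t * (L * d)) + (ε : ℝ≥0∞) + ENNReal.ofReal (s - t) := by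
        refine add_le_add (add_le_add ?_ ?_) le_rfl
        · rw [ENNReal.ofReal_mul ht0.le]
        · exact ENNReal.mul_div_le
    _ = ENNReal.ofReal (t * (L * d)) + ENNReal.ofReal (s - t) + (ε : ℝ≥0∞) := by ring
    _ ≤ ENNReal.ofReal ((L + 1) * dist x y) + (ε : ℝ≥0∞) := by
        refine add_le_add_left ?_ _
        rw [← ENNReal.ofReal_add (by positivity) (by linarith)]
        apply ENNReal.ofReal_le_ofReal
        have h1 : t * (L * d) = L * (t * d) := by ring
        have h2 : L * (t * d) ≤ L * dist x y := mul_le_mul_of_nonneg_left harc hL.le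
        nlinarith
theorem cone_truncated_below_LNE {n : ℕ} (S : Set (EuclideanSpace ℝ (Fin n)))
    (hS : S ⊆ Metric.sphere (0 : EuclideanSpace ℝ (Fin n)) 1)
    (hclosed : IsClosed S) (hconn : IsConnected S) (hLNE : IsLNE S)
    (R : ℝ) (hR : 0 < R) :
    IsLNE (nonnegCone S \ {x | ‖x‖ < R}) := by
  obtain ⟨L, hL, hLNEw⟩ := hLNE
  refine ⟨L + 1, by linarith, ?_⟩
  intro x hx y hy
  rcases le_total ‖x‖ ‖y‖ with h | h
  · exact key_half hS hL hLNEw hR hx hy h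
  · calc innerDist (nonnegCone S \ {z | ‖z‖ < R}) x y
        ≤ innerDist (nonnegCone S \ {z | ‖z‖ < R}) y x := innerDist_symm_le _ y x
      _ ≤ ENNReal.ofReal ((L + 1) * dist y x) := key_half hS hL hLNEw hR hy hx h
      _ = ENNReal.ofReal ((L + 1) * dist x y) := by rw [dist_comm]
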